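/- Local boundedness implies a quadratic bound: if for every execution ρ of an abstract machine from an initial state, every m-free sub-execution σ (a sub-execution with no multiplicative transitions) satisfies |σ|_e ≤ |ρ'|_m where ρ' is the prefix of ρ up to the start of σ, then for every execution ρ the total number of exponential transitions satisfies |ρ|_e = O(|ρ|_m^2). -/
import Mathlib


/-- An abstract transition system whose transitions are labeled as
    multiplicative (m), exponential (e), or commutative (c). -/
structure LabeledTS (S : Type*) where
  M : S → S → Prop
  E : S → S → Prop
  C : S → S → Prop
  Init : S → Prop

namespace LabeledTS

variable {S : Type*} (T : LabeledTS S)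

/-- `Run T s s' a b`: an execution from `s` to `s'` with exactly `a`
    multiplicative and `b` exponential transitions. -/
inductive Run : S → S → ℕ → ℕ → Prop
  | refl (s : S) : Run s s 0 0
  | m {s₁ s₂ s₃ : S} {a b : ℕ} : T.M s₁ s₂ → Run s₂ s₃ a b → Run s₁ s₃ (a + 1) b
  | e {s₁ s₂ s₃ : S} {a b : ℕ} : T.E s₁ s₂ → Run s₂ s₃ a b → Run s₁ s₃ a (b + 1)
  | c {s₁ s₂ s₃ : S} {a b : ℕ} : T.C s₁ s₂ → Run s₂ s₃ a b → Run s₁ s₃ a b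

/-- Local boundedness: along any execution from an initial state, every
    m-free sub-execution has at most as many e-transitions as the number of
    m-transitions in the prefix preceding it. -/
def LocallyBounded : Prop :=
  ∀ s₀ s₁ s₂ : S, ∀ a b b' : ℕ, T.Init s₀ →
    T.Run s₀ s₁ a b → T.Run s₁ s₂ 0 b' → b' ≤ a

end LabeledTS

namespace LabeledTS

variable {S : Type*} {T : LabeledTS S}

lemma Run.cast {s s' : S} {a b a' b' : ℕ} (h : T.Run s s' a b)
    (ha : a = a') (hb : b = b') : T.Run s s' a' b' := ha ▸ hb ▸ h

lemma Run.append {s₁ s₂ s₃ : S} {a b a' b' : ℕ} (h : T.Run s₁ s₂ a b)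
    (h' : T.Run s₂ s₃ a' b') : T.Run s₁ s₃ (a + a') (b + b') := by
  induction h with
  | refl => exact h'.cast (by omega) (by omega)
  | m hm _ ih => exact ((Run.m hm (ih h'))).cast (by omega) (by omega)
  | e he _ ih => exact ((Run.e he (ih h'))).cast (by omega) (by omega)
  | c hc _ ih => exact Run.c hc (ih h')

lemma Run.split {s₁ s₂ : S} {a b : ℕ} (h : T.Run s₁ s₂ a b) (ha : 0 < a) :
    ∃ t t' b₁ b₂, T.Run s₁ t 0 b₁ ∧ T.M t t' ∧ T.Run t' s₂ (a - 1) b₂ ∧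
      b = b₁ + b₂ := by
  induction h with
  | refl => omega
  | @m _ _ _ a b hm hr _ =>
      exact ⟨_, _, 0, b, Run.refl _, hm, hr.cast (by omega) rfl, by omega⟩
  | @e _ _ _ a b he _ ih =>
      obtain ⟨t, t', b₁, b₂, h1, h2, h3, h4⟩ := ih ha
      exact ⟨t, t', b₁ + 1, b₂, Run.e he h1, h2, h3, by omega⟩
  | @c _ _ _ a b hc _ ih =>
      obtain ⟨t, t', b₁, b₂, h1, h2, h3, h4⟩ := ih ha
      exact ⟨t, t', b₁, b₂, Run.c hc h1, h2, h3, h4⟩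

lemma key (hlb : T.LocallyBounded) :
    ∀ a' : ℕ, ∀ s₀ s₁ s₂ a b b', T.Init s₀ → T.Run s₀ s₁ a b →
      T.Run s₁ s₂ a' b' → b' ≤ (a + a') * (a' + 1) := by
  intro a'
  induction a' with
  | zero =>
      intro s₀ s₁ s₂ a b b' h0 hp hr
      have := hlb s₀ s₁ s₂ a b b' h0 hp hr
      nlinarith
  | succ a' ih =>
      intro s₀ s₁ s₂ a b b' h0 hp hr
      obtain ⟨t, t', b₁, b₂, h1, h2, h3, h4⟩ := hr.split (Nat.succ_pos _)
      have hb₁ : b₁ ≤ a := hlb s₀ s₁ t a b b₁ h0 hp h1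
      have hp' : T.Run s₀ t' (a + 1) (b + b₁) :=
        ((hp.append h1).append (Run.m h2 (Run.refl _))).cast (by omega) (by omega)
      have hb₂ := ih s₀ t' s₂ (a + 1) (b + b₁) b₂ h0 hp'
        (h3.cast (by omega) rfl)
      nlinarith

end LabeledTS

/-- Local boundedness implies that the number of exponential
    transitions of any execution from an initial state is quadratic in the
    number of its multiplicative transitions: `|ρ|_e = O(|ρ|_m²)`. -/
theorem locally_bounded_implies_quadratic {S : Type*} (T : LabeledTS S)
    (hlb : T.LocallyBounded) :
    ∃ k : ℕ, ∀ (s₀ s : S) (a b : ℕ), T.Init s₀ → T.Run s₀ s a b →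
      b ≤ k * (a ^ 2 + 1) := by
  refine ⟨2, fun s₀ s a b h0 hr => ?_⟩
  have := LabeledTS.key hlb a s₀ s₀ s 0 0 b h0 (LabeledTS.Run.refl _) hr
  nlinarith
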